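/- Let ℓ be an odd prime and n a positive integer. Then the rational number (2(ℓ+1)/B_{ℓ+1})·σ_ℓ(n) − 24·σ₁(n), where B_{ℓ+1} is the (ℓ+1)-st Bernoulli number, lies in ℓ·ℤ_(ℓ), where ℤ_(ℓ) is the localization of ℤ at the prime ℓ. Consequently, the n-th q-expansion coefficient of the normalized Eisenstein series E_{ℓ+1} is congruent modulo ℓ to the n-th q-expansion coefficient of E₂, i.e., E_{ℓ+1} ≡ E₂ (mod ℓ). -/

import Mathlib

namespace EisCong
open Finset
/-- `r = a/b` with `ℓ ∤ b`: certificate of `ℓ`-integrality. -/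
def P (ℓ : ℕ) (r : ℚ) : Prop := ∃ a b : ℤ, ¬ (ℓ:ℤ) ∣ b ∧ r = a / b

lemma primeZ {ℓ : ℕ} (hp : ℓ.Prime) : Prime (ℓ:ℤ) :=
  Int.prime_iff_natAbs_prime.mpr (by simpa using hp)

lemma P_int {ℓ : ℕ} (hp : ℓ.Prime) (a : ℤ) : P ℓ (a : ℚ) := by
  refine ⟨a, 1, fun h => ?_, by simp⟩
  have := Int.eq_one_of_dvd_one (by positivity) h
  have : ℓ = 1 := by exact_mod_cast this
  exact hp.one_lt.ne' this

lemma P_nat {ℓ : ℕ} (hp : ℓ.Prime) (a : ℕ) : P ℓ (a : ℚ) := by exact_mod_cast P_int hp (a : ℤ)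

lemma P_add {ℓ : ℕ} (hp : ℓ.Prime) {r s : ℚ} (hr : P ℓ r) (hs : P ℓ s) : P ℓ (r + s) := by
  obtain ⟨a, b, hb, rfl⟩ := hr
  obtain ⟨c, d, hd, rfl⟩ := hs
  have hb0 : (b:ℚ) ≠ 0 := Int.cast_ne_zero.2 (fun h => hb (h ▸ dvd_zero _))
  have hd0 : (d:ℚ) ≠ 0 := Int.cast_ne_zero.2 (fun h => hd (h ▸ dvd_zero _))
  refine ⟨a * d + b * c, b * d, ?_, by push_cast; rw [div_add_div _ _ hb0 hd0]⟩
  intro h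
  rcases ((primeZ hp).dvd_mul.mp h) with h | h
  exacts [hb h, hd h]

lemma P_mul {ℓ : ℕ} (hp : ℓ.Prime) {r s : ℚ} (hr : P ℓ r) (hs : P ℓ s) : P ℓ (r * s) := by
  obtain ⟨a, b, hb, rfl⟩ := hr
  obtain ⟨c, d, hd, rfl⟩ := hs
  refine ⟨a * c, b * d, ?_, by push_cast; ring⟩
  intro h
  rcases ((primeZ hp).dvd_mul.mp h) with h | h
  exacts [hb h, hd h]

lemma P_neg {ℓ : ℕ} {r : ℚ} (hr : P ℓ r) : P ℓ (-r) := by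
  obtain ⟨a, b, hb, rfl⟩ := hr
  exact ⟨-a, b, hb, by push_cast; ring⟩

lemma P_sub {ℓ : ℕ} (hp : ℓ.Prime) {r s : ℚ} (hr : P ℓ r) (hs : P ℓ s) : P ℓ (r - s) := by
  rw [sub_eq_add_neg]; exact P_add hp hr (P_neg hs)

lemma P_sum {ℓ : ℕ} (hp : ℓ.Prime) {α : Type*} {s : Finset α} {f : α → ℚ}
    (h : ∀ i ∈ s, P ℓ (f i)) : P ℓ (∑ i ∈ s, f i) := by
  classical
  induction s using Finset.induction_on with
  | empty => simpa using P_nat hp 0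
  | @insert x s hx ih =>
    rw [Finset.sum_insert hx]
    exact P_add hp (h _ (Finset.mem_insert_self _ _))
      (ih fun i hi => h i (Finset.mem_insert_of_mem hi))

lemma P_isEllIntegral {ℓ : ℕ} {r : ℚ} (h : P ℓ r) : ¬ (ℓ : ℕ) ∣ r.den := by
  obtain ⟨a, b, hb, rfl⟩ := h
  intro hdvd
  have h1 : (((a / b : ℚ)).den : ℤ) ∣ b := by
    have := Rat.den_dvd a b
    rwa [Rat.divInt_eq_div] at this
  exact hb ((Int.natCast_dvd_natCast.mpr hdvd).trans h1)

open Finset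

lemma fermatZ {ℓ : ℕ} (hp : ℓ.Prime) (a : ℤ) : (ℓ:ℤ) ∣ a ^ ℓ - a := by
  haveI : Fact ℓ.Prime := ⟨hp⟩
  have h : ((a ^ ℓ - a : ℤ) : ZMod ℓ) = 0 := by
    push_cast; rw [ZMod.pow_card]; ring
  exact (ZMod.intCast_zmod_eq_zero_iff_dvd _ ℓ).mp h

lemma binom2 (x y : ℤ) (m : ℕ) :
    ∃ z : ℤ, (x + y) ^ (m + 1) = x ^ (m + 1) + (m + 1) * x ^ m * y + y ^ 2 * z := by
  induction m with
  | zero => exact ⟨0, by ring⟩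
  | succ m ih =>
    obtain ⟨z, hz⟩ := ih
    exact ⟨(m + 1) * x ^ m + z * (x + y), by
      have h2 : (x + y) ^ (m + 1 + 1) = (x + y) * (x + y) ^ (m + 1) := by ring
      rw [h2, hz]; push_cast; ring⟩

lemma dvd_sum_sub {α : Type*} (s : Finset α) (f g : α → ℤ) (c : ℤ)
    (h : ∀ i ∈ s, c ∣ f i - g i) : c ∣ (∑ i ∈ s, f i) - ∑ i ∈ s, g i := by
  rw [← Finset.sum_sub_distrib]; exact Finset.dvd_sum h

lemma six_sum_sq (n : ℕ) : 6 * (∑ k ∈ range n, (k:ℤ) ^ 2) = n * (n - 1) * (2 * n - 1) := by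
  induction n with
  | zero => simp
  | succ n ih => rw [Finset.sum_range_succ, mul_add, ih]; push_cast; ring

/-- The key integer congruence: for a prime `ℓ ≥ 5`,
`24·∑_{k<ℓ} k^{ℓ+1} ≡ 2ℓ(ℓ+1) (mod ℓ²)`. -/
lemma lemD {ℓ : ℕ} (hp : ℓ.Prime) (h5 : 5 ≤ ℓ) :
    ∃ z : ℤ, 24 * (∑ k ∈ range ℓ, (k:ℤ) ^ (ℓ + 1)) = 2 * ℓ * (ℓ + 1) + ℓ ^ 2 * z := by
  have hodd : ¬ 2 ∣ ℓ := fun hd => by rcases (hp.eq_one_or_self_of_dvd 2 hd) with h | h <;> omega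
  obtain ⟨h, hℓ⟩ : ∃ h, ℓ = 2 * h + 1 := ⟨ℓ / 2, by omega⟩
  have hℓ0 : 0 < ℓ := by omega
  -- notation
  set A : ℤ := ∑ k ∈ range ℓ, (k:ℤ) ^ (ℓ + 1) with hA
  set T : ℤ := ∑ k ∈ range ℓ, ((2 * k / ℓ : ℕ) : ℤ) * (k:ℤ) ^ ℓ with hT
  -- Step 0: the multiplication-by-2 bijection
  have d0 : ∑ k ∈ range ℓ, ((2 * k % ℓ : ℕ) : ℤ) ^ (ℓ + 1) = A := by
    rw [hA]
    refine Finset.sum_nbij' (fun k => 2 * k % ℓ) (fun k => (h + 1) * k % ℓ)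
      (fun a _ => mem_range.mpr (Nat.mod_lt _ hℓ0))
      (fun a _ => mem_range.mpr (Nat.mod_lt _ hℓ0)) ?_ ?_ (fun a _ => rfl)
    · intro a ha
      rw [mem_range] at ha
      show (h + 1) * (2 * a % ℓ) % ℓ = a
      have h1 : (h + 1) * (2 * a % ℓ) % ℓ = (h + 1) * (2 * a) % ℓ := by
        conv_rhs => rw [Nat.mul_mod]
        rw [Nat.mul_mod, Nat.mod_mod_of_dvd _ dvd_rfl]
      have h2 : (h + 1) * (2 * a) = a + ℓ * a := by rw [hℓ]; ring
      rw [h1, h2, Nat.add_mul_mod_self_left, Nat.mod_eq_of_lt ha]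
    · intro a ha
      rw [mem_range] at ha
      show 2 * ((h + 1) * a % ℓ) % ℓ = a
      have h1 : 2 * ((h + 1) * a % ℓ) % ℓ = 2 * ((h + 1) * a) % ℓ := by
        conv_rhs => rw [Nat.mul_mod]
        rw [Nat.mul_mod, Nat.mod_mod_of_dvd _ dvd_rfl]
      have h2 : 2 * ((h + 1) * a) = a + ℓ * a := by rw [hℓ]; ring
      rw [h1, h2, Nat.add_mul_mod_self_left, Nat.mod_eq_of_lt ha]
  -- Step 1: mod ℓ² congruence from the binomial theorem
  have d1 : (ℓ:ℤ)^2 ∣ (2 ^ (ℓ + 1) - 1) * A - (ℓ + 1) * ℓ * 2 ^ ℓ * T := by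
    have expand : ∀ k ∈ range ℓ, (ℓ:ℤ)^2 ∣
        (2 ^ (ℓ + 1) * (k:ℤ) ^ (ℓ + 1) - (ℓ + 1) * ℓ * 2 ^ ℓ * (((2 * k / ℓ : ℕ) : ℤ) * (k:ℤ) ^ ℓ))
          - ((2 * k % ℓ : ℕ) : ℤ) ^ (ℓ + 1) := by
      intro k _
      obtain ⟨z, hz⟩ := binom2 (2 * (k:ℤ)) (-((ℓ:ℤ) * ((2 * k / ℓ : ℕ) : ℤ))) ℓ
      have hrk : ((2 * k % ℓ : ℕ) : ℤ) = 2 * (k:ℤ) + -((ℓ:ℤ) * ((2 * k / ℓ : ℕ) : ℤ)) := by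
        have h0 := Nat.div_add_mod (2 * k) ℓ
        have h1 : (ℓ:ℤ) * ((2 * k / ℓ : ℕ) : ℤ) + ((2 * k % ℓ : ℕ) : ℤ) = 2 * (k:ℤ) := by
          exact_mod_cast congrArg (Nat.cast : ℕ → ℤ) h0
        linarith
      rw [hrk, hz]
      refine ⟨-(((2 * k / ℓ : ℕ) : ℤ)^2 * z), ?_⟩
      push_cast
      ring
    have := dvd_sum_sub (range ℓ)
      (fun k => 2 ^ (ℓ + 1) * (k:ℤ) ^ (ℓ + 1) - (ℓ + 1) * ℓ * 2 ^ ℓ * (((2 * k / ℓ : ℕ) : ℤ) * (k:ℤ) ^ ℓ))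
      (fun k => ((2 * k % ℓ : ℕ) : ℤ) ^ (ℓ + 1)) ((ℓ:ℤ)^2) expand
    rw [Finset.sum_sub_distrib, d0, ← Finset.mul_sum, ← Finset.mul_sum, ← hA, ← hT] at this
    convert this using 1
    ring
  -- Step 2: T ≡ 1/8 mod ℓ
  have d2 : (ℓ:ℤ) ∣ 8 * T - 1 := by
    have hTsplit : T = ∑ k ∈ Ico (h + 1) ℓ, (k:ℤ) ^ ℓ := by
      rw [hT, range_eq_Ico, ← Finset.sum_Ico_consecutive _ (Nat.zero_le (h+1)) (by omega : h + 1 ≤ ℓ)]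
      have e0 : ∀ k ∈ Ico 0 (h + 1), ((2 * k / ℓ : ℕ) : ℤ) * (k:ℤ) ^ ℓ = 0 := by
        intro k hk
        rw [mem_Ico] at hk
        have h0 : 2 * k / ℓ = 0 := Nat.div_eq_of_lt (by omega)
        rw [h0]; norm_num
      have e1 : ∀ k ∈ Ico (h + 1) ℓ, ((2 * k / ℓ : ℕ) : ℤ) * (k:ℤ) ^ ℓ = (k:ℤ) ^ ℓ := by
        intro k hk
        rw [mem_Ico] at hk
        have h0 : 2 * k / ℓ = 1 := by
          apply Nat.div_eq_of_lt_le <;> omega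
        rw [h0]; norm_num
      rw [Finset.sum_congr rfl e0, Finset.sum_congr rfl e1, Finset.sum_const_zero, zero_add]
    -- Fermat on each term
    have hferm : (ℓ:ℤ) ∣ (∑ k ∈ Ico (h + 1) ℓ, (k:ℤ) ^ ℓ) - ∑ k ∈ Ico (h + 1) ℓ, (k:ℤ) := by
      exact dvd_sum_sub _ _ _ _ (fun k _ => fermatZ hp (k:ℤ))
    -- Gauss sums
    have G1 : (∑ i ∈ range ℓ, i) * 2 = ℓ * (2 * h) := by
      rw [Finset.sum_range_id_mul_two, hℓ, Nat.add_sub_cancel]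
    have G2 : (∑ i ∈ range (h + 1), i) * 2 = (h + 1) * h := by
      rw [Finset.sum_range_id_mul_two, Nat.add_sub_cancel]
    have hsplit2 : (∑ i ∈ range (h + 1), i) + ∑ i ∈ Ico (h + 1) ℓ, i = ∑ i ∈ range ℓ, i := by
      simp only [range_eq_Ico]
      exact Finset.sum_Ico_consecutive _ (Nat.zero_le (h+1)) (by omega : h + 1 ≤ ℓ)
    have hIcoZ : (∑ k ∈ Ico (h + 1) ℓ, (k:ℤ)) = ((∑ k ∈ Ico (h + 1) ℓ, k : ℕ) : ℤ) := by
      push_cast; rfl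
    have key : 8 * (∑ k ∈ Ico (h + 1) ℓ, (k:ℤ)) - 1 = (ℓ:ℤ) * (6 * h - 1) := by
      have c1 : ((∑ i ∈ range ℓ, i : ℕ) : ℤ) * 2 = (ℓ:ℤ) * (2 * h) := by exact_mod_cast congrArg (Nat.cast : ℕ → ℤ) G1
      have c2 : ((∑ i ∈ range (h + 1), i : ℕ) : ℤ) * 2 = ((h:ℤ) + 1) * h := by exact_mod_cast congrArg (Nat.cast : ℕ → ℤ) G2
      have c3 : ((∑ i ∈ range (h + 1), i : ℕ) : ℤ) + ((∑ i ∈ Ico (h + 1) ℓ, i : ℕ) : ℤ) = ((∑ i ∈ range ℓ, i : ℕ) : ℤ) := by exact_mod_cast congrArg (Nat.cast : ℕ → ℤ) hsplit2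
      rw [hIcoZ]
      have hc : (ℓ:ℤ) = 2 * h + 1 := by exact_mod_cast congrArg (Nat.cast : ℕ → ℤ) hℓ
      rw [hc] at c1 ⊢
      linear_combination 4 * c1 - 4 * c2 + 8 * c3
    rw [hTsplit]
    obtain ⟨u, hu⟩ := hferm
    refine ⟨8 * u + (6 * h - 1), ?_⟩
    linear_combination 8 * hu + key
  -- Step 3: 2^ℓ ≡ 2 mod ℓ
  have d3 : (ℓ:ℤ) ∣ 2 ^ ℓ - 2 := by simpa using fermatZ hp 2
  -- Step 4: ℓ ∣ A
  have d4 : (ℓ:ℤ) ∣ A := by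
    have hAsq : (ℓ:ℤ) ∣ A - ∑ k ∈ range ℓ, (k:ℤ) ^ 2 := by
      refine dvd_sum_sub _ _ _ _ (fun k _ => ?_)
      have : (k:ℤ) ^ (ℓ + 1) - (k:ℤ) ^ 2 = (k:ℤ) * ((k:ℤ) ^ ℓ - (k:ℤ)) + ((k:ℤ)^2 - (k:ℤ)^2) := by ring
      rw [this]
      simpa using Dvd.dvd.mul_left (fermatZ hp (k:ℤ)) (k:ℤ)
    have hsq : (ℓ:ℤ) ∣ ∑ k ∈ range ℓ, (k:ℤ) ^ 2 := by
      have h6 : (ℓ:ℤ) ∣ 6 * ∑ k ∈ range ℓ, (k:ℤ) ^ 2 := by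
        rw [six_sum_sq]; exact dvd_mul_of_dvd_left (dvd_mul_right _ _) _
      have hprime : Prime (ℓ:ℤ) := Int.prime_iff_natAbs_prime.mpr (by simpa using hp)
      rcases hprime.dvd_mul.mp h6 with h' | h'
      · exfalso
        have : (ℓ:ℤ) ≤ 6 := Int.le_of_dvd (by norm_num) h'
        have hl6 : ℓ ≤ 6 := by exact_mod_cast this
        interval_cases ℓ
        · exact absurd (by exact_mod_cast h' : (5:ℤ) ∣ 6) (by decide)
        · exact absurd hp (by decide)
      · exact h'
    obtain ⟨a, ha⟩ := hAsq
    obtain ⟨b, hb⟩ := hsq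
    exact ⟨a + b, by linarith⟩
  -- Final assembly
  obtain ⟨x, hx⟩ := d1
  obtain ⟨u, hu⟩ := d2
  obtain ⟨v, hv⟩ := d3
  obtain ⟨a, ha⟩ := d4
  refine ⟨8 * x - 16 * a * v + (ℓ + 1) * v + (ℓ + 1) * 2 ^ ℓ * u, ?_⟩
  linear_combination 8 * hx + (ℓ:ℤ) * ((ℓ:ℤ) + 1) * 2^ℓ * hu + (-16 * A + (ℓ:ℤ) * ((ℓ:ℤ) + 1)) * hv - 16 * (ℓ:ℤ) * v * ha
open Finset


/-- `ℓ^(j+1)/(j+2)` is `ℓ`-integral. -/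
lemma P_pow_div {ℓ : ℕ} (hp : ℓ.Prime) (j : ℕ) :
    P ℓ ((ℓ:ℚ) ^ (j + 1) / ((j + 2 : ℕ) : ℚ)) := by
  set v := (j + 2).factorization ℓ with hv
  have hvd : ℓ ^ v ∣ j + 2 := Nat.ordProj_dvd _ _
  set b := (j + 2) / ℓ ^ v with hbdef
  have hb : ¬ ℓ ∣ b := Nat.not_dvd_ordCompl hp (by omega)
  have hbe : j + 2 = ℓ ^ v * b := (Nat.ordProj_mul_ordCompl_eq_self _ _).symm
  have hvle : v ≤ j + 1 := by
    by_contra hlt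
    have h1 : ℓ ^ (j + 2) ≤ ℓ ^ v := Nat.pow_le_pow_right hp.pos (by omega)
    have h2 : ℓ ^ v ≤ j + 2 := Nat.le_of_dvd (by omega) hvd
    have h3 : j + 2 < ℓ ^ (j + 2) := Nat.lt_pow_self hp.one_lt
    omega
  refine ⟨(ℓ:ℤ) ^ (j + 1 - v), b, ?_, ?_⟩
  · intro hdvd
    exact hb (by exact_mod_cast (Int.natCast_dvd_natCast.mp
      (by exact_mod_cast hdvd : ((ℓ:ℕ):ℤ) ∣ ((b:ℕ):ℤ))))
  · have hb0 : (b:ℚ) ≠ 0 := by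
      have : b ≠ 0 := fun hh => hb (hh ▸ dvd_zero ℓ)
      exact_mod_cast this
    have hl0 : (ℓ:ℚ) ≠ 0 := by exact_mod_cast hp.pos.ne'
    have hcast : ((j + 2 : ℕ) : ℚ) = (ℓ:ℚ) ^ v * b := by exact_mod_cast congrArg (Nat.cast : ℕ → ℚ) hbe
    have hpow : (ℓ:ℚ) ^ (j + 1) = (ℓ:ℚ) ^ (j + 1 - v) * (ℓ:ℚ) ^ v := by
      rw [← pow_add]; congr 1; omega
    rw [hcast, hpow]
    push_cast
    field_simp

/-- The key identity from Faulhaber's formula. -/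
lemma key (ℓ m : ℕ) :
    (ℓ:ℚ) * bernoulli m = (∑ k ∈ range ℓ, (k:ℚ) ^ m) -
      ∑ i ∈ range m, bernoulli i * ((m + 1).choose i) * (ℓ:ℚ) ^ (m + 1 - i) / (m + 1) := by
  have h := sum_range_pow ℓ m
  rw [Finset.sum_range_succ] at h
  have h1 : (m + 1).choose m = m + 1 := Nat.choose_succ_self_right m
  have h2 : m + 1 - m = 1 := by omega
  rw [h1, h2] at h
  have hm1 : ((m:ℚ) + 1) ≠ 0 := by positivity
  have h3 : bernoulli m * ((m + 1 : ℕ) : ℚ) * (ℓ:ℚ) ^ 1 / ((m:ℚ) + 1) = (ℓ:ℚ) * bernoulli m := by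
    push_cast
    field_simp
  push_cast at h3 h ⊢
  linarith [h]

lemma term_eq {ℓ m i : ℕ} (hi : i < m) :
    bernoulli i * ((m + 1).choose i : ℚ) * (ℓ:ℚ) ^ (m + 1 - i) / ((m:ℚ) + 1) =
      ((ℓ:ℚ) * bernoulli i) * (m.choose i : ℚ) * ((ℓ:ℚ) ^ (m - i) / ((m + 1 - i : ℕ) : ℚ)) := by
  have hc := Nat.choose_mul_succ_eq m i
  have hcq : (m.choose i : ℚ) * ((m:ℚ) + 1) = ((m + 1).choose i : ℚ) * ((m + 1 - i : ℕ) : ℚ) := by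
    exact_mod_cast congrArg (Nat.cast : ℕ → ℚ) hc
  have e1 : m + 1 - i = (m - i) + 1 := by omega
  have hm1 : ((m:ℚ) + 1) ≠ 0 := by positivity
  have hmi : ((m - i + 1 : ℕ) : ℚ) ≠ 0 := by
    have : m - i + 1 ≠ 0 := by omega
    exact_mod_cast this
  rw [e1] at hcq ⊢
  rw [pow_succ]
  have hr : ((ℓ:ℚ) * bernoulli i) * (m.choose i : ℚ) * ((ℓ:ℚ) ^ (m - i) / ((m - i + 1 : ℕ) : ℚ)) =
      ((ℓ:ℚ) * bernoulli i * (m.choose i : ℚ) * (ℓ:ℚ) ^ (m - i)) / ((m - i + 1 : ℕ) : ℚ) := by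
    ring
  rw [hr, div_eq_div_iff hm1 hmi]
  linear_combination (-(bernoulli i) * (ℓ:ℚ) * (ℓ:ℚ) ^ (m - i)) * hcq


/-- Weak von Staudt–Clausen: `ℓ·B_m` is `ℓ`-integral. -/
lemma weakVSC {ℓ : ℕ} (hp : ℓ.Prime) (m : ℕ) : P ℓ ((ℓ:ℚ) * bernoulli m) := by
  induction m using Nat.strong_induction_on with
  | _ m ih =>
  rw [key]
  apply P_sub hp
  · have hcast : (∑ k ∈ range ℓ, (k:ℚ) ^ m) = ((∑ k ∈ range ℓ, k ^ m : ℕ) : ℚ) := by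
      push_cast; rfl
    rw [hcast]; exact P_nat hp _
  · apply P_sum hp
    intro i hi
    rw [mem_range] at hi
    rw [term_eq hi]
    refine P_mul hp (P_mul hp (ih i hi) (P_nat hp _)) ?_
    have e1 : m - i = (m - i - 1) + 1 := by omega
    have e2 : m + 1 - i = (m - i - 1) + 2 := by omega
    rw [e1, e2]
    exact P_pow_div hp _

/-- Quotients in the Faulhaber tail for `m = ℓ+1` are divisible by `ℓ²`. -/
lemma lemA' {ℓ : ℕ} (hp : ℓ.Prime) (h5 : 5 ≤ ℓ) {i : ℕ} (hi : i < ℓ) :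
    ∃ y : ℚ, P ℓ y ∧ (ℓ:ℚ) ^ (ℓ + 1 - i) / ((ℓ + 2 - i : ℕ) : ℚ) = (ℓ:ℚ) ^ 2 * y := by
  have hl0 : (ℓ:ℚ) ≠ 0 := by
    have := hp.pos; intro hc; exact_mod_cast absurd hc (by exact_mod_cast this.ne')
  by_cases hc : i = 2
  · subst hc
    refine ⟨(ℓ:ℚ) ^ (ℓ - 4), ?_, ?_⟩
    · have : ((ℓ ^ (ℓ - 4) : ℕ) : ℚ) = (ℓ:ℚ) ^ (ℓ - 4) := by push_cast; rfl
      rw [← this]; exact P_nat hp _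
    · have e1 : ℓ + 1 - 2 = (ℓ - 4) + 3 := by omega
      have e2 : ℓ + 2 - 2 = ℓ := by omega
      rw [e1, e2, pow_add]
      field_simp
  · set d := ℓ + 2 - i with hd
    have hdl : ¬ ℓ ∣ d := by
      intro hdvd
      have h1 : 0 < d := by omega
      have h2 : d < 2 * ℓ := by omega
      have h3 : d = ℓ := by
        obtain ⟨c, hc2⟩ := hdvd
        have hc1 : c = 1 := by
          rcases Nat.lt_or_ge c 2 with h' | h'
          · interval_cases c <;> omega
          · have := Nat.mul_le_mul_left ℓ h'
            omega
        subst hc1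
        omega
      omega
    refine ⟨(ℓ:ℚ) ^ (ℓ - 1 - i) / ((d : ℕ) : ℚ), ⟨(ℓ:ℤ) ^ (ℓ - 1 - i), (d : ℤ), ?_, by push_cast; ring⟩, ?_⟩
    · intro hdvd
      exact hdl (by exact_mod_cast hdvd)
    · have hd0 : ((d : ℕ) : ℚ) ≠ 0 := by
        have : d ≠ 0 := by omega
        exact_mod_cast this
      have e1 : ℓ + 1 - i = 2 + (ℓ - 1 - i) := by omega
      rw [e1, pow_add]
      field_simp
  
/-- Sum of terms each of the form `c·(P-element)`. -/
lemma P_sum_mul {ℓ : ℕ} (hp : ℓ.Prime) {α : Type*} {s : Finset α} {f : α → ℚ} {c : ℚ}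
    (h : ∀ i ∈ s, ∃ y, P ℓ y ∧ f i = c * y) :
    ∃ w, P ℓ w ∧ ∑ i ∈ s, f i = c * w := by
  classical
  induction s using Finset.induction_on with
  | empty => exact ⟨0, by simpa using P_nat hp 0, by simp⟩
  | @insert x s hx ih =>
    obtain ⟨y, hy, hxy⟩ := h x (Finset.mem_insert_self _ _)
    obtain ⟨w, hw, hsw⟩ := ih (fun i hi => h i (Finset.mem_insert_of_mem hi))
    exact ⟨y + w, P_add hp hy hw, by rw [Finset.sum_insert hx, hxy, hsw]; ring⟩

/-- The main Bernoulli congruence: `24·B_{ℓ+1} = 2(ℓ+1) + ℓ·w` with `w` `ℓ`-integral. -/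
lemma bernoulli_cong {ℓ : ℕ} (hp : ℓ.Prime) (h5 : 5 ≤ ℓ) :
    ∃ w : ℚ, P ℓ w ∧ 24 * bernoulli (ℓ + 1) = 2 * ((ℓ:ℚ) + 1) + (ℓ:ℚ) * w := by
  have hl0 : (ℓ:ℚ) ≠ 0 := by
    have := hp.pos.ne'; exact_mod_cast this
  -- Faulhaber side
  have hkey := key ℓ (ℓ + 1)
  -- the i = ℓ term vanishes
  have hBℓ : bernoulli ℓ = 0 := by
    rw [bernoulli_eq_bernoulli'_of_ne_one (by omega)]
    exact bernoulli'_eq_zero_of_odd (hp.odd_of_ne_two (by omega)) (by omega)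
  rw [Finset.sum_range_succ] at hkey
  rw [hBℓ] at hkey
  simp only [zero_mul, zero_div, add_zero] at hkey
  -- the tail is divisible by ℓ²
  obtain ⟨w1, hw1, hsum⟩ : ∃ w, P ℓ w ∧
      (∑ i ∈ range ℓ, bernoulli i * ((ℓ + 1 + 1).choose i) * (ℓ:ℚ) ^ (ℓ + 1 + 1 - i) / (((ℓ + 1 : ℕ) : ℚ) + 1))
        = (ℓ:ℚ) ^ 2 * w := by
    apply P_sum_mul hp
    intro i hi
    rw [mem_range] at hi
    have hi' : i < ℓ + 1 := by omega
    rw [term_eq hi']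
    obtain ⟨y, hy, hyeq⟩ := lemA' hp h5 hi
    have e2 : ℓ + 1 + 1 - i = ℓ + 2 - i := by omega
    rw [e2, hyeq]
    exact ⟨(ℓ:ℚ) * bernoulli i * ((ℓ + 1).choose i : ℚ) * y,
      P_mul hp (P_mul hp (weakVSC hp i) (P_nat hp _)) hy, by ring⟩
  rw [hsum] at hkey
  obtain ⟨z, hz⟩ := lemD hp h5
  have hzQ : 24 * (∑ k ∈ range ℓ, (k:ℚ) ^ (ℓ + 1)) = 2 * (ℓ:ℚ) * ((ℓ:ℚ) + 1) + (ℓ:ℚ) ^ 2 * (z:ℚ) := by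
    have h' := congrArg (Int.cast : ℤ → ℚ) hz
    push_cast at h'
    linear_combination h'
  refine ⟨(z:ℚ) - 24 * w1, P_sub hp (P_int hp z) (P_mul hp (P_nat hp 24) hw1), ?_⟩
  apply mul_left_cancel₀ hl0
  linear_combination 24 * hkey + hzQ

/-- `σ_ℓ(n) ≡ σ_1(n) mod ℓ`. -/
lemma sigma_cong {ℓ : ℕ} (hp : ℓ.Prime) (n : ℕ) :
    ∃ t : ℤ, (∑ d ∈ n.divisors, (d:ℚ) ^ ℓ) - (∑ d ∈ n.divisors, (d:ℚ) ^ 1) = (ℓ:ℚ) * t := by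
  have hdvd : (ℓ:ℤ) ∣ (∑ d ∈ n.divisors, ((d:ℤ) ^ ℓ - (d:ℤ))) :=
    Finset.dvd_sum fun d _ => fermatZ hp d
  obtain ⟨t, ht⟩ := hdvd
  refine ⟨t, ?_⟩
  have h' := congrArg (Int.cast : ℤ → ℚ) ht
  push_cast at h'
  rw [Finset.sum_sub_distrib] at h'
  simp only [pow_one]
  linarith [h']

theorem main (ℓ : ℕ) (hp : ℓ.Prime) (hodd : ℓ ≠ 2) (n : ℕ) (hn : 0 < n) :
    ∃ x : ℚ, (¬ (ℓ : ℕ) ∣ x.den) ∧ (2 * ((ℓ : ℚ) + 1) / bernoulli (ℓ + 1) *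
        (∑ d ∈ n.divisors, (d : ℚ) ^ ℓ) -
      24 * (∑ d ∈ n.divisors, (d : ℚ) ^ 1)) = (ℓ : ℚ) * x := by
  set σL := ∑ d ∈ n.divisors, (d:ℚ) ^ ℓ with hσL
  set σ1 := ∑ d ∈ n.divisors, (d:ℚ) ^ 1 with hσ1
  have hσP : P ℓ σL := by
    have hc : σL = ((∑ d ∈ n.divisors, d ^ ℓ : ℕ) : ℚ) := by rw [hσL]; push_cast; rfl
    rw [hc]; exact P_nat hp _
  obtain ⟨t, ht⟩ := sigma_cong hp n
  rcases eq_or_ne ℓ 3 with h3 | h3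
  · -- ℓ = 3 : everything is an integer divisible by 3
    subst h3
    have hb4 : bernoulli (3 + 1) = -1/30 := by
      rw [show (3:ℕ) + 1 = 4 from rfl, bernoulli_eq_bernoulli'_of_ne_one (by norm_num)]
      rw [bernoulli'_four]
    refine ⟨-80 * σL - 8 * σ1, ?_, ?_⟩
    · have h1 : P 3 σ1 := by
        have := ht
        have hp3 : (3:ℕ).Prime := by norm_num
        -- σ1 is also a nat cast
        have hc : σ1 = ((∑ d ∈ n.divisors, d ^ 1 : ℕ) : ℚ) := by rw [hσ1]; push_cast; rfl
        rw [hc]; exact P_nat hp _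
      exact P_isEllIntegral (P_sub hp (P_mul hp (P_neg (P_nat hp 80)) hσP)
        (P_mul hp (P_nat hp 8) h1))
    · rw [hb4]
      push_cast
      ring
  · -- ℓ ≥ 5
    have h5 : 5 ≤ ℓ := by
      have h4 : ℓ ≠ 4 := by intro h; rw [h] at hp; norm_num at hp
      have h2 := hp.two_le
      omega
    obtain ⟨w, hw, hBeq⟩ := bernoulli_cong hp h5
    have hl0 : (ℓ:ℚ) ≠ 0 := by exact_mod_cast hp.pos.ne'
    obtain ⟨a, b, hab, hwab⟩ := hw
    have hb0 : (b:ℚ) ≠ 0 := Int.cast_ne_zero.2 (fun h => hab (h ▸ dvd_zero _))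
    have hprime : Prime (ℓ:ℤ) := Int.prime_iff_natAbs_prime.mpr (by simpa using hp)
    have hden : ¬ (ℓ:ℤ) ∣ (2 * (ℓ + 1) * b + ℓ * a) := by
      intro hd
      have h1 : (ℓ:ℤ) ∣ 2 * (ℓ + 1) * b := by
        have := dvd_sub hd (Dvd.intro a rfl)
        simpa using this
      rcases hprime.dvd_mul.mp h1 with h2 | h2
      · rcases hprime.dvd_mul.mp h2 with h2 | h2
        · have := Int.le_of_dvd (by norm_num) h2
          have : ℓ ≤ 2 := by exact_mod_cast this
          omega
        · have h6 : (ℓ:ℤ) ∣ 1 := (dvd_add_right (dvd_refl _)).mp h2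
          have := Int.le_of_dvd (by norm_num) h6
          have : ℓ ≤ 1 := by exact_mod_cast this
          omega
      · exact hab h2
    set B := bernoulli (ℓ + 1) with hB
    have hBne : B ≠ 0 := by
      intro h0
      rw [h0, hwab] at hBeq
      have hq : (2 * ((ℓ:ℚ) + 1) * b + ℓ * a) = 0 := by
        field_simp at hBeq
        linear_combination -hBeq
      have hz : ((2 * (ℓ + 1) * b + ℓ * a : ℤ) : ℚ) = 0 := by push_cast; linear_combination hq
      have : (2 * (ℓ + 1) * b + ℓ * a : ℤ) = 0 := by exact_mod_cast hz
      exact hden (this ▸ dvd_zero _)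
    have hBinv : P ℓ (1 / B) := by
      refine ⟨24 * b, 2 * (ℓ + 1) * b + ℓ * a, hden, ?_⟩
      have hd0 : ((2 * (ℓ + 1) * b + ℓ * a : ℤ) : ℚ) ≠ 0 := by
        intro h
        have hz : (2 * (ℓ + 1) * b + ℓ * a : ℤ) = 0 := by exact_mod_cast h
        refine hden ?_
        rw [hz]
        exact dvd_zero _
      rw [hwab] at hBeq
      rw [div_eq_div_iff hBne hd0]
      push_cast
      field_simp at hBeq
      linear_combination -hBeq
    refine ⟨24 * (t:ℚ) - w * σL * (1 / B), ?_, ?_⟩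
    · exact P_isEllIntegral (P_sub hp (P_mul hp (P_nat hp 24) (P_int hp t))
        (P_mul hp (P_mul hp (⟨a, b, hab, hwab⟩ : P ℓ w) hσP) hBinv))
    · rw [← hσL, ← hσ1] at ht
      field_simp
      linear_combination (-σL) * hBeq + 24 * B * ht

end EisCong


/-- A rational number lies in `ℤ_(ℓ)`, the localization of `ℤ` at the prime `ℓ` (viewed as a
subring of `ℚ`), iff its reduced denominator is not divisible by `ℓ`. -/
def IsEllIntegral (ℓ : ℕ) (r : ℚ) : Prop := ¬ (ℓ : ℕ) ∣ r.den

/-- A rational number lies in `ℓ·ℤ_(ℓ)` iff it is `ℓ` times an `ℓ`-integral rational. -/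
def MemEllZLoc (ℓ : ℕ) (r : ℚ) : Prop := ∃ x : ℚ, IsEllIntegral ℓ x ∧ r = (ℓ : ℚ) * x

/-- Let ℓ be an odd prime and `n` a positive integer. Then
`(2(ℓ+1)/B_{ℓ+1})·σ_ℓ(n) − 24·σ₁(n)` lies in `ℓ·ℤ_(ℓ)`. Consequently the `n`-th q-expansion
coefficient of the normalized Eisenstein series `E_{ℓ+1}` is congruent modulo `ℓ` to that of
`E₂`, i.e. `E_{ℓ+1} ≡ E₂ (mod ℓ)`. -/
theorem eisenstein_weight_ell_add_one_congruent_E2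
    (ℓ : ℕ) (hp : ℓ.Prime) (hodd : ℓ ≠ 2) (n : ℕ) (hn : 0 < n) :
    MemEllZLoc ℓ (2 * ((ℓ : ℚ) + 1) / bernoulli (ℓ + 1) *
        (∑ d ∈ n.divisors, (d : ℚ) ^ ℓ) -
      24 * (∑ d ∈ n.divisors, (d : ℚ) ^ 1)) := by
  obtain ⟨x, hx1, hx2⟩ := EisCong.main ℓ hp hodd n hn
  exact ⟨x, hx1, hx2⟩
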